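/- Let r be a prime, a ≥ 1 an integer, e = r^a, and let ζ ∈ ℂ be a primitive e-th root of unity. Write R = ℤ[ζ] and let 𝔭 be the ideal of R generated by 1 − ζ. Let A be an R-algebra that is finitely generated as an R-module, and let M, N be A-modules carrying compatible R-module structures that are free of finite rank as R-modules. If Hom_{ℂ⊗_R A}(ℂ⊗_R M, ℂ⊗_R N) ≠ {0}, then Hom_A(M/𝔭M, N/𝔭N) ≠ {0}. -/

import Mathlib

open TensorProduct

section BaseChange

variable (R : Type) [CommRing R] (S : Type) [CommRing S] [Algebra R S]
  (A : Type) [Ring A] [Algebra R A]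
  (M : Type) [AddCommGroup M] [Module R M] [Module A M] [IsScalarTower R A M]

/-- The action of `A` on `S ⊗[R] M` through the right tensor factor. -/
noncomputable def moduleTensorRight : Module A (S ⊗[R] M) :=
  Module.compHom _
    (((Module.End.baseChangeHom R S M).toRingHom).comp
      (Module.toModuleEnd R M (S := A)))

/-- The natural module structure of `S ⊗[R] A` on `S ⊗[R] M`, where `S` acts through the
left factor and `A` through the right factor. -/
noncomputable def moduleTensorTensor : Module (S ⊗[R] A) (S ⊗[R] M) :=
  letI : Module A (S ⊗[R] M) := moduleTensorRight R S A M
  letI : IsScalarTower R A (S ⊗[R] M) := by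
    constructor
    intro r x m
    show (LinearMap.baseChange S (DistribMulAction.toLinearMap R M (r • x))) m
        = r • (LinearMap.baseChange S (DistribMulAction.toLinearMap R M x)) m
    have h : DistribMulAction.toLinearMap R M (r • x)
        = r • DistribMulAction.toLinearMap R M x := by
      ext m'
      exact smul_assoc r x m'
    rw [h, LinearMap.baseChange_smul, LinearMap.smul_apply]
  letI : SMulCommClass S A (S ⊗[R] M) := by
    constructor
    intro s x m
    exact ((LinearMap.baseChange S (DistribMulAction.toLinearMap R M x)).map_smul s m).symm
  TensorProduct.Algebra.module

variable (N : Type) [AddCommGroup N] [Module R N] [Module A N] [IsScalarTower R A N]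

/-- The statement that there is a nonzero `S ⊗[R] A`-linear map `S ⊗[R] M → S ⊗[R] N`. -/
noncomputable def HomBaseChangeNonzero : Prop :=
  letI := moduleTensorTensor R S A M
  letI := moduleTensorTensor R S A N
  ∃ f : (S ⊗[R] M) →ₗ[S ⊗[R] A] (S ⊗[R] N), f ≠ 0

end BaseChange

/-- `ℤ[ζ]`, the subring of `ℂ` generated by `ζ`. -/
noncomputable def cycloRing (ζ : ℂ) : Subalgebra ℤ ℂ := Algebra.adjoin ℤ {ζ}

/-- `ζ` as an element of `ℤ[ζ]`. -/
noncomputable def cycloZeta (ζ : ℂ) : cycloRing ζ :=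
  ⟨ζ, Algebra.self_mem_adjoin_singleton ℤ ζ⟩

/-- The `A`-submodule `𝔭M = (1 - ζ)M` of an `A`-module `M` with compatible
`ℤ[ζ]`-module structure. -/
noncomputable def pModule (ζ : ℂ) (A : Type) [Ring A] [Algebra (cycloRing ζ) A]
    (M : Type) [AddCommGroup M] [Module (cycloRing ζ) M] [Module A M]
    [IsScalarTower (cycloRing ζ) A M] : Submodule A M :=
  LinearMap.range ((1 - cycloZeta ζ) • (LinearMap.id : M →ₗ[A] M))

section Helpers

open Polynomial

/-! ### The `(1 - ζ)`-adic division argument -/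

section StepA

variable {R : Type} [CommRing R] [IsDomain R] [IsNoetherianRing R]
  {A : Type} [Ring A] [Algebra R A]
  {M N : Type} [AddCommGroup M] [AddCommGroup N]
  [Module R M] [Module R N] [Module A M] [Module A N]
  [IsScalarTower R A M] [IsScalarTower R A N]
  [Module.Free R N] [Module.Finite R N]

lemma stepA (π : R) (hπ0 : π ≠ 0) (hπu : ¬ IsUnit π)
    (h : M →ₗ[R] N) (hcomm : ∀ (x : A) (m : M), h (x • m) = x • h m) (hne : h ≠ 0) :
    ∃ f : (M ⧸ LinearMap.range (π • (LinearMap.id : M →ₗ[A] M))) →ₗ[A]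
        (N ⧸ LinearMap.range (π • (LinearMap.id : N →ₗ[A] N))), f ≠ 0 := by
  classical
  set c := Module.Free.chooseBasis R N with hc
  -- scalar multiplication by a nonzero element of `R` is injective on `N`
  have hsinj : ∀ x : R, x ≠ 0 → Function.Injective fun n : N => x • n := by
    intro x hx n1 n2 he
    simp only at he
    apply c.repr.injective
    ext i
    have h2 := DFunLike.congr_fun (congrArg c.repr he) i
    rw [map_smul, map_smul, Finsupp.smul_apply, Finsupp.smul_apply,
      smul_eq_mul, smul_eq_mul] at h2
    exact mul_left_cancel₀ hx h2
  set Sset : Set ℕ := {k | ∀ m : M, ∃ n : N, h m = π ^ k • n} with hSset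
  have hS0 : 0 ∈ Sset := fun m => ⟨h m, by rw [pow_zero, one_smul]⟩
  have hdc : ∀ {k k' : ℕ}, k' ≤ k → k ∈ Sset → k' ∈ Sset := by
    intro k k' hle hk m
    obtain ⟨n, hn⟩ := hk m
    exact ⟨π ^ (k - k') • n, by
      rw [hn, smul_smul, ← pow_add, Nat.add_sub_cancel' hle]⟩
  obtain ⟨m₀, hm₀⟩ : ∃ m, h m ≠ 0 := by
    by_contra hcon
    push_neg at hcon
    exact hne (LinearMap.ext fun m => by rw [hcon m, LinearMap.zero_apply])
  obtain ⟨i₀, hi₀⟩ : ∃ i, c.repr (h m₀) i ≠ 0 := by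
    by_contra hcon
    push_neg at hcon
    apply hm₀
    have : c.repr (h m₀) = 0 := Finsupp.ext hcon
    exact (LinearEquiv.map_eq_zero_iff c.repr).mp this
  obtain ⟨K, hK⟩ : ∃ K, K ∉ Sset := by
    by_contra hcon
    push_neg at hcon
    apply hi₀
    have hmem : ∀ K : ℕ, c.repr (h m₀) i₀ ∈ Ideal.span {π} ^ K := by
      intro K
      obtain ⟨n, hn⟩ := hcon K m₀
      rw [hn, map_smul, Finsupp.smul_apply, smul_eq_mul, Ideal.span_singleton_pow]
      exact Ideal.mem_span_singleton.mpr ⟨_, rfl⟩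
    have hbot : ⨅ i : ℕ, (Ideal.span {π} : Ideal R) ^ i = ⊥ :=
      Ideal.iInf_pow_eq_bot_of_isDomain _
        (by rw [Ne, Ideal.span_singleton_eq_top]; exact hπu)
    have hx : c.repr (h m₀) i₀ ∈ (⊥ : Ideal R) := by
      rw [← hbot]
      exact Submodule.mem_iInf _ |>.mpr hmem
    simpa using hx
  set k := Nat.findGreatest (· ∈ Sset) K with hkdef
  have hk : k ∈ Sset := Nat.findGreatest_spec (Nat.zero_le K) hS0
  have hk1 : (k + 1) ∉ Sset := by
    intro hmem
    rcases le_or_gt (k + 1) K with hle | hlt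
    · exact Nat.findGreatest_is_greatest (Nat.lt_succ_self k) hle hmem
    · exact hK (hdc hlt.le hmem)
  have hπk : (π ^ k : R) ≠ 0 := pow_ne_zero _ hπ0
  choose g hg using hk
  have hginj := hsinj _ hπk
  have hgadd : ∀ m1 m2, g (m1 + m2) = g m1 + g m2 := by
    intro m1 m2
    apply hginj
    show π ^ k • g (m1 + m2) = π ^ k • (g m1 + g m2)
    rw [← hg, map_add, hg, hg, smul_add]
  have hgsmulR : ∀ (x : R) (m : M), g (x • m) = x • g m := by
    intro x m
    apply hginj
    show π ^ k • g (x • m) = π ^ k • (x • g m)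
    rw [← hg, map_smul, hg, smul_comm]
  have hgsmulA : ∀ (x : A) (m : M), g (x • m) = x • g m := by
    intro x m
    apply hginj
    show π ^ k • g (x • m) = π ^ k • (x • g m)
    rw [← hg, hcomm, hg, smul_comm]
  obtain ⟨m₁, hm₁⟩ : ∃ m₁ : M, ∀ n : N, h m₁ ≠ π ^ (k + 1) • n := by
    by_contra hcon
    push_neg at hcon
    exact hk1 hcon
  have hg₁ : ∀ n : N, g m₁ ≠ π • n := by
    intro n hn
    exact hm₁ n (by rw [hg m₁, hn, smul_smul, ← pow_succ])
  set hmapA : M →ₗ[A] N :=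
    { toFun := g
      map_add' := hgadd
      map_smul' := fun x m => hgsmulA x m } with hhmapA
  set pM := LinearMap.range (π • (LinearMap.id : M →ₗ[A] M)) with hpM
  set pN := LinearMap.range (π • (LinearMap.id : N →ₗ[A] N)) with hpN
  have hmemN : ∀ y : N, y ∈ pN ↔ ∃ n : N, π • n = y := by
    intro y
    rw [hpN, LinearMap.mem_range]
    constructor
    · rintro ⟨n, rfl⟩
      exact ⟨n, by simp⟩
    · rintro ⟨n, rfl⟩
      exact ⟨n, by simp⟩
  have hker : pM ≤ LinearMap.ker (pN.mkQ ∘ₗ hmapA) := by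
    rintro x ⟨m, rfl⟩
    simp only [LinearMap.mem_ker, LinearMap.comp_apply, LinearMap.smul_apply,
      LinearMap.id_apply, Submodule.mkQ_apply]
    rw [Submodule.Quotient.mk_eq_zero]
    show g (π • m) ∈ pN
    rw [hgsmulR]
    exact (hmemN _).mpr ⟨g m, rfl⟩
  refine ⟨Submodule.liftQ pM (pN.mkQ ∘ₗ hmapA) hker, ?_⟩
  intro hzero
  have hz := DFunLike.congr_fun hzero (Submodule.Quotient.mk m₁)
  rw [Submodule.liftQ_apply, LinearMap.comp_apply, Submodule.mkQ_apply,
    LinearMap.zero_apply, Submodule.Quotient.mk_eq_zero] at hz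
  obtain ⟨n, hn⟩ := (hmemN _).mp hz
  exact hg₁ n hn.symm

end StepA

/-! ### Base change in the module structure definitions -/

lemma moduleTensorTensor_tmul_smul {R : Type} [CommRing R] {S : Type} [CommRing S] [Algebra R S]
    {A : Type} [Ring A] [Algebra R A]
    {M : Type} [AddCommGroup M] [Module R M] [Module A M] [IsScalarTower R A M]
    (s : S) (x : A) (t : S ⊗[R] M) :
    (letI := moduleTensorTensor R S A M
     (s ⊗ₜ[R] x) • t) = s • (DistribMulAction.toLinearMap R M x).baseChange S t := rfl

end Helpers

section StepB

variable (R : Type) [CommRing R] (S : Type) [CommRing S] [Algebra R S] [Module.Flat R S]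
  (A : Type) [Ring A] [Algebra R A] [Module.Finite R A]
  (M N : Type) [AddCommGroup M] [AddCommGroup N]
  [Module R M] [Module R N] [Module A M] [Module A N]
  [IsScalarTower R A M] [IsScalarTower R A N]
  [Module.Free R M] [Module.Finite R M]

set_option maxHeartbeats 2000000 in
lemma stepB (hall : ∀ h : M →ₗ[R] N, (∀ (x : A) (m : M), h (x • m) = x • h m) → h = 0) :
    ¬ HomBaseChangeNonzero R S A M N := by
  classical
  intro hne
  unfold HomBaseChangeNonzero at hne
  letI := moduleTensorTensor R S A M
  letI := moduleTensorTensor R S A N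
  obtain ⟨f, hf⟩ := hne
  set ι := Module.Free.ChooseBasisIndex R M with hι
  set b := Module.Free.chooseBasis R M with hb
  obtain ⟨sn, av, hspan⟩ := Module.Finite.exists_fin (R := R) (M := A)
  set aM : Fin sn → M →ₗ[R] M := fun i => DistribMulAction.toLinearMap R M (av i) with haM
  set aN : Fin sn → N →ₗ[R] N := fun i => DistribMulAction.toLinearMap R N (av i) with haN
  set T : Fin sn → (M →ₗ[R] N) →ₗ[R] (M →ₗ[R] N) := fun i =>
    { toFun := fun h => aN i ∘ₗ h - h ∘ₗ aM i
      map_add' := fun h1 h2 => by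
        refine LinearMap.ext fun m => ?_
        simp only [LinearMap.sub_apply, LinearMap.comp_apply, LinearMap.add_apply, map_add]
        abel
      map_smul' := fun r h => by
        refine LinearMap.ext fun m => ?_
        simp only [LinearMap.sub_apply, LinearMap.comp_apply, LinearMap.smul_apply, map_smul,
          RingHom.id_apply, smul_sub] } with hT
  set Tp : (M →ₗ[R] N) →ₗ[R] (Fin sn → (M →ₗ[R] N)) := LinearMap.pi T with hTp
  -- `Tp` is injective
  have hTpinj : Function.Injective Tp := by
    rw [← LinearMap.ker_eq_bot]
    rw [LinearMap.ker_eq_bot']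
    intro h hTh
    apply hall h
    intro x m
    have hWsub : ∀ y ∈ Submodule.span R (Set.range av), ∀ m : M, h (y • m) = y • h m := by
      intro y hy
      induction hy using Submodule.span_induction with
      | mem y hy =>
        obtain ⟨i, rfl⟩ := hy
        intro m
        have hTi : aN i ∘ₗ h - h ∘ₗ aM i = 0 := congrFun hTh i
        have h3 := DFunLike.congr_fun hTi m
        rw [LinearMap.sub_apply, LinearMap.comp_apply, LinearMap.comp_apply,
          LinearMap.zero_apply, sub_eq_zero] at h3
        exact h3.symm
      | zero => intro m; rw [zero_smul, zero_smul, map_zero]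
      | add y z _ _ hy hz => intro m; rw [add_smul, add_smul, map_add, hy, hz]
      | smul r y _ hy => intro m; rw [smul_assoc, map_smul, hy, smul_assoc]
    exact hWsub x (by rw [hspan]; trivial) m
  -- the natural isomorphism `S ⊗ Hom_R(M, N) ≃ Hom_S(S ⊗ M, S ⊗ N)`
  set e1 : (M →ₗ[R] N) ≃ₗ[R] (ι → N) := (b.constr R (M' := N)).symm with he1def
  have he1 : ∀ h : M →ₗ[R] N, e1 h = fun i => h (b i) := by
    intro h
    rw [he1def, LinearEquiv.symm_apply_eq]
    refine b.ext fun i => ?_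
    rw [Module.Basis.constr_basis]
  set E1 : (S ⊗[R] (M →ₗ[R] N)) ≃ₗ[R] (S ⊗[R] (ι → N)) :=
    TensorProduct.congr (LinearEquiv.refl R S) e1 with hE1
  set E2 : (S ⊗[R] (ι → N)) ≃ₗ[S] (ι → S ⊗[R] N) :=
    TensorProduct.piRight R S S (fun _ : ι => N) with hE2
  set E3 : (ι → S ⊗[R] N) ≃ₗ[S] ((S ⊗[R] M) →ₗ[S] (S ⊗[R] N)) :=
    (b.baseChange S).constr S with hE3
  set Φ : (S ⊗[R] (M →ₗ[R] N)) ≃ₗ[R] ((S ⊗[R] M) →ₗ[S] (S ⊗[R] N)) :=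
    E1 ≪≫ₗ (E2.restrictScalars R) ≪≫ₗ (E3.restrictScalars R) with hΦdef
  have hΦ : ∀ (s : S) (h : M →ₗ[R] N), Φ (s ⊗ₜ[R] h) = s • (h.baseChange S) := by
    intro s h
    show E3 (E2 (E1 (s ⊗ₜ[R] h))) = s • (h.baseChange S)
    rw [hE1, TensorProduct.congr_tmul, LinearEquiv.refl_apply, he1 h, hE2,
      TensorProduct.piRight_apply, TensorProduct.piRightHom_tmul, hE3]
    refine (b.baseChange S).ext fun i => ?_
    rw [Module.Basis.constr_basis, Module.Basis.baseChange_apply, LinearMap.smul_apply,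
      LinearMap.baseChange_tmul, smul_tmul', smul_eq_mul, mul_one]
  -- intertwining property
  have hcommT : ∀ (i : Fin sn) (w : S ⊗[R] (M →ₗ[R] N)),
      Φ ((T i).lTensor S w)
        = (aN i).baseChange S ∘ₗ (Φ w) - (Φ w) ∘ₗ (aM i).baseChange S := by
    intro i w
    induction w using TensorProduct.induction_on with
    | zero =>
      rw [map_zero, map_zero]
      refine LinearMap.ext fun t => ?_
      simp only [LinearMap.zero_apply, LinearMap.sub_apply, LinearMap.comp_apply, map_zero,
        sub_zero]
    | tmul s h =>
      rw [LinearMap.lTensor_tmul, hΦ, hΦ]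
      have hTih : T i h = aN i ∘ₗ h - h ∘ₗ aM i := rfl
      rw [hTih, LinearMap.baseChange_sub, LinearMap.baseChange_comp, LinearMap.baseChange_comp]
      refine LinearMap.ext fun t => ?_
      simp only [LinearMap.smul_apply, LinearMap.sub_apply, LinearMap.comp_apply, map_smul,
        smul_sub]
    | add w1 w2 h1 h2 =>
      rw [map_add, map_add, h1, h2, map_add Φ w1 w2, LinearMap.comp_add, LinearMap.add_comp]
      abel
  -- `f`, seen as an `S`-linear map, commutes with all base-changed operators
  set fS : (S ⊗[R] M) →ₗ[S] (S ⊗[R] N) :=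
    { toFun := f
      map_add' := map_add f
      map_smul' := by
        intro s t
        have hidM : DistribMulAction.toLinearMap R M (1 : A) = LinearMap.id := by
          refine LinearMap.ext fun m => ?_; exact one_smul A m
        have hidN : DistribMulAction.toLinearMap R N (1 : A) = LinearMap.id := by
          refine LinearMap.ext fun m => ?_; exact one_smul A m
        have h1 : (s ⊗ₜ[R] (1 : A)) • t = s • t := by
          rw [moduleTensorTensor_tmul_smul, hidM, LinearMap.baseChange_id, LinearMap.id_apply]
        have h2 : (s ⊗ₜ[R] (1 : A)) • f t = s • f t := by
          rw [moduleTensorTensor_tmul_smul, hidN, LinearMap.baseChange_id, LinearMap.id_apply]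
        rw [RingHom.id_apply, ← h1, ← h2]
        exact f.map_smul (s ⊗ₜ[R] (1 : A)) t } with hfSdef
  have hfSapp : ∀ t, fS t = f t := fun t => rfl
  have hTSf : ∀ i : Fin sn,
      (aN i).baseChange S ∘ₗ fS - fS ∘ₗ (aM i).baseChange S = 0 := by
    intro i
    refine LinearMap.ext fun t => ?_
    rw [LinearMap.sub_apply, LinearMap.comp_apply, LinearMap.comp_apply,
      LinearMap.zero_apply, sub_eq_zero, hfSapp, hfSapp]
    have h2 := f.map_smul ((1 : S) ⊗ₜ[R] (av i)) t
    rw [moduleTensorTensor_tmul_smul, one_smul] at h2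
    rw [moduleTensorTensor_tmul_smul, one_smul] at h2
    rw [haN, haM]
    exact h2.symm
  -- pull back to `S ⊗ Hom_R(M, N)`
  set w : S ⊗[R] (M →ₗ[R] N) := Φ.symm fS with hw
  have hΦw : Φ w = fS := Φ.apply_symm_apply fS
  have hwi : ∀ i : Fin sn, (T i).lTensor S w = 0 := by
    intro i
    apply Φ.injective
    rw [map_zero, hcommT i w, hΦw]
    exact hTSf i
  have hpiw : ∀ w' : S ⊗[R] (M →ₗ[R] N),
      TensorProduct.piRight R S S (fun _ : Fin sn => (M →ₗ[R] N)) (Tp.lTensor S w')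
        = fun i => (T i).lTensor S w' := by
    intro w'
    induction w' using TensorProduct.induction_on with
    | zero =>
      rw [map_zero, map_zero]
      funext i
      rw [map_zero]
      rfl
    | tmul s h =>
      rw [LinearMap.lTensor_tmul, TensorProduct.piRight_apply, TensorProduct.piRightHom_tmul]
      funext i
      rw [LinearMap.lTensor_tmul]
      rfl
    | add w1 w2 h1 h2 =>
      rw [map_add, map_add, h1, h2]
      funext i
      rw [map_add]
      rfl
  have hTp0 : Tp.lTensor S w = 0 := by
    apply (TensorProduct.piRight R S S (fun _ : Fin sn => (M →ₗ[R] N))).injective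
    rw [map_zero, hpiw w]
    funext i
    rw [hwi i]
    rfl
  have hlinj : Function.Injective (Tp.lTensor S) :=
    Module.Flat.lTensor_preserves_injective_linearMap (M := S) Tp hTpinj
  have hw0 : w = 0 := by
    apply hlinj
    rw [hTp0, map_zero]
  have hfS0 : fS = 0 := by
    rw [← hΦw, hw0, map_zero]
  apply hf
  refine LinearMap.ext fun t => ?_
  have h4 : fS t = 0 := by rw [hfS0]; rfl
  rw [← hfSapp t, h4]
  rfl

end StepB

section Cyclo

open Polynomial

lemma cyclo_sub_one_ne_zero {r a : ℕ} (hr : r.Prime) (ha : 1 ≤ a) {ζ : ℂ}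
    (hζ : IsPrimitiveRoot ζ (r ^ a)) : (1 - cycloZeta ζ : cycloRing ζ) ≠ 0 := by
  intro hc
  have hζ1 : ζ ≠ 1 :=
    hζ.ne_one (Nat.one_lt_pow (by omega) hr.one_lt)
  apply hζ1
  have hval := congrArg Subtype.val hc
  have : (1 : ℂ) - ζ = 0 := hval
  linear_combination -this

lemma cyclo_sub_one_not_unit {r a : ℕ} (hr : r.Prime) (ha : 1 ≤ a) {ζ : ℂ}
    (hζ : IsPrimitiveRoot ζ (r ^ a)) : ¬ IsUnit (1 - cycloZeta ζ : cycloRing ζ) := by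
  intro hu
  obtain ⟨k, rfl⟩ : ∃ k, a = k + 1 := ⟨a - 1, (Nat.succ_pred_eq_of_pos ha).symm⟩
  haveI : Fact r.Prime := ⟨hr⟩
  have hpos : 0 < r ^ (k + 1) := pow_pos hr.pos _
  obtain ⟨u, hu⟩ := hu
  have hmul : (1 - cycloZeta ζ) * ((u⁻¹ : (cycloRing ζ)ˣ) : cycloRing ζ) = 1 := by
    rw [← hu]; exact u.mul_inv
  obtain ⟨p, hp⟩ : ∃ p : ℤ[X], Polynomial.aeval ζ p =
      (((u⁻¹ : (cycloRing ζ)ˣ) : cycloRing ζ) : ℂ) := by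
    have hmem : (((u⁻¹ : (cycloRing ζ)ˣ) : cycloRing ζ) : ℂ)
        ∈ (Polynomial.aeval ζ : ℤ[X] →ₐ[ℤ] ℂ).range := by
      rw [← Algebra.adjoin_singleton_eq_range_aeval]
      exact ((u⁻¹ : (cycloRing ζ)ˣ) : cycloRing ζ).2
    exact (AlgHom.mem_range _).mp hmem
  have hC : (1 - ζ) * Polynomial.aeval ζ p = 1 := by
    have hval := congrArg Subtype.val hmul
    rw [hp]
    exact hval
  set q : ℤ[X] := 1 - (1 - Polynomial.X) * p with hq
  have haq : Polynomial.aeval ζ q = 0 := by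
    rw [hq]
    simp only [map_sub, map_mul, map_one, Polynomial.aeval_X]
    rw [hC, sub_self]
  have hdvd : Polynomial.cyclotomic (r ^ (k + 1)) ℤ ∣ q := by
    rw [Polynomial.cyclotomic_eq_minpoly hζ hpos]
    exact minpoly.isIntegrallyClosed_dvd (hζ.isIntegral hpos) haq
  have hevald : (Polynomial.cyclotomic (r ^ (k + 1)) ℤ).eval 1 ∣ q.eval 1 :=
    Polynomial.eval_dvd hdvd
  rw [Polynomial.eval_one_cyclotomic_prime_pow] at hevald
  have hq1 : q.eval 1 = 1 := by simp [hq]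
  rw [hq1] at hevald
  have hle : (r : ℤ) ≤ 1 := Int.le_of_dvd one_pos hevald
  have h2 := hr.two_le
  omega

lemma cycloRing_finite (ζ : ℂ) (e : ℕ) (he : e ≠ 0) (hζ : ζ ^ e = 1) :
    Module.Finite ℤ (cycloRing ζ) := by
  have hint : IsIntegral ℤ ζ := by
    refine ⟨Polynomial.X ^ e - 1, Polynomial.monic_X_pow_sub_C 1 he, ?_⟩
    simp [hζ]
  have hfg : (Algebra.adjoin ℤ {ζ}).toSubmodule.FG := hint.fg_adjoin_singleton
  exact Module.Finite.iff_fg.mpr hfg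

end Cyclo

lemma flat_over_domain (R L : Type) [CommRing R] [IsDomain R] [Field L] [Algebra R L]
    (hinj : Function.Injective (algebraMap R L)) : Module.Flat R L := by
  letI : Algebra (FractionRing R) L := RingHom.toAlgebra (IsFractionRing.lift hinj)
  haveI : IsScalarTower R (FractionRing R) L :=
    IsScalarTower.of_algebraMap_eq fun x => (IsFractionRing.lift_algebraMap hinj x).symm
  haveI : Module.Flat R (FractionRing R) := IsLocalization.flat _ (nonZeroDivisors R)
  exact Module.Flat.trans R (FractionRing R) L

set_option maxHeartbeats 2000000
set_option synthInstance.maxHeartbeats 1000000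


/-- Let `r` be a prime, `a ≥ 1`, `e = r^a`, `ζ ∈ ℂ` a primitive `e`-th root of unity,
`R = ℤ[ζ]` and `𝔭 = (1 - ζ) ⊆ R`.  Let `A` be an `R`-algebra which is finitely generated
as an `R`-module, and let `M`, `N` be `A`-modules carrying compatible `R`-module
structures which are free of finite rank as `R`-modules.  If
`Hom_{ℂ⊗ᵣA}(ℂ⊗ᵣM, ℂ⊗ᵣN) ≠ 0` then `Hom_A(M/𝔭M, N/𝔭N) ≠ 0`. -/
theorem statement2 (r a : ℕ) (hr : r.Prime) (ha : 1 ≤ a) (ζ : ℂ)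
    (hζ : IsPrimitiveRoot ζ (r ^ a))
    (A : Type) [Ring A] [Algebra (cycloRing ζ) A] [Module.Finite (cycloRing ζ) A]
    (M N : Type) [AddCommGroup M] [AddCommGroup N]
    [Module (cycloRing ζ) M] [Module (cycloRing ζ) N]
    [Module A M] [Module A N]
    [IsScalarTower (cycloRing ζ) A M] [IsScalarTower (cycloRing ζ) A N]
    [Module.Free (cycloRing ζ) M] [Module.Finite (cycloRing ζ) M]
    [Module.Free (cycloRing ζ) N] [Module.Finite (cycloRing ζ) N]
    (hne : HomBaseChangeNonzero (cycloRing ζ) ℂ A M N) :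
    ∃ f : (M ⧸ pModule ζ A M) →ₗ[A] (N ⧸ pModule ζ A N), f ≠ 0 := by
  classical
  have hea : (r : ℕ) ^ a ≠ 0 := pow_ne_zero _ hr.pos.ne'
  haveI : Module.Finite ℤ (cycloRing ζ) :=
    cycloRing_finite ζ (r ^ a) hea (hζ.pow_eq_one)
  haveI : IsNoetherianRing (cycloRing ζ) :=
    Algebra.FiniteType.isNoetherianRing ℤ (cycloRing ζ)
  -- flatness of `ℂ` over `ℤ[ζ]`
  have hinj : Function.Injective (algebraMap (cycloRing ζ) ℂ) := Subtype.val_injective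
  haveI : Module.Flat (cycloRing ζ) ℂ := flat_over_domain (cycloRing ζ) ℂ hinj
  -- the element `π = 1 - ζ`
  have hπ0 : (1 - cycloZeta ζ : cycloRing ζ) ≠ 0 := cyclo_sub_one_ne_zero hr ha hζ
  have hπu : ¬ IsUnit (1 - cycloZeta ζ : cycloRing ζ) := cyclo_sub_one_not_unit hr ha hζ
  by_cases hex : ∃ h : M →ₗ[cycloRing ζ] N,
      (∀ (x : A) (m : M), h (x • m) = x • h m) ∧ h ≠ 0
  · obtain ⟨h, hcomm, hne0⟩ := hex
    exact stepA (1 - cycloZeta ζ) hπ0 hπu h hcomm hne0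
  · exfalso
    refine stepB (cycloRing ζ) ℂ A M N ?_ hne
    intro h hcomm
    by_contra h0
    exact hex ⟨h, hcomm, h0⟩
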